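/- For γ > 0 and complex sequences z, w in the open unit ball of ℓ², the reproducing kernel identity ∑_ν binom(|ν|+γ, ν) z^ν (w̄)^ν = (1 − ∑_j z_j w̄_j)^{−γ} holds, where the sum is over all finitely supported multi-indices ν, |ν| = ∑ν_j, binom(|ν|+γ,ν) = γ(γ+1)⋯(|ν|+γ−1)/(ν_1!ν_2!⋯), and both sides converge absolutely. -/

import Mathlib

open Finset Complex

lemma slit_of_ball {t : ℂ} (ht : ‖t‖ < 1) : (1 - t) ∈ Complex.slitPlane := by
  left
  simp only [Complex.sub_re, Complex.one_re]
  have : |t.re| ≤ ‖t‖ := Complex.abs_re_le_norm t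
  linarith [abs_le.mp this |>.2]

lemma iter_deriv_cpow (γ : ℝ) (n : ℕ) {t : ℂ} (ht : t ∈ Metric.ball (0:ℂ) 1) :
    iteratedDeriv n (fun s : ℂ => (1 - s) ^ (-(γ:ℂ))) t
      = (∏ i ∈ Finset.range n, ((γ:ℂ) + i)) * (1 - t) ^ (-(γ:ℂ) - n) := by
  induction n generalizing t with
  | zero => simp
  | succ n ih =>
    rw [iteratedDeriv_succ]
    have hev : (iteratedDeriv n (fun s : ℂ => (1 - s) ^ (-(γ:ℂ))))
        =ᶠ[nhds t] (fun s => (∏ i ∈ Finset.range n, ((γ:ℂ) + i)) * (1 - s) ^ (-(γ:ℂ) - n)) := by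
      filter_upwards [Metric.isOpen_ball.mem_nhds ht] with s hs using ih hs
    rw [hev.deriv_eq]
    have hslit : (1 - t) ∈ Complex.slitPlane := slit_of_ball (by simpa using ht)
    have h1 : HasDerivAt (fun s : ℂ => 1 - s) (-1) t := by
      simpa using (hasDerivAt_id t).const_sub 1
    have h2 := (h1.cpow_const (c := -(γ:ℂ) - n) (by simpa using hslit)).const_mul
      (∏ i ∈ Finset.range n, ((γ:ℂ) + i))
    rw [h2.deriv]
    rw [Finset.prod_range_succ]
    push_cast
    rw [show -(γ:ℂ) - n - 1 = -(γ:ℂ) - (n+1) by ring]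
    ring

lemma binomSeries (γ : ℝ) {u : ℂ} (hu : ‖u‖ < 1) :
    HasSum (fun m : ℕ => (((∏ i ∈ Finset.range m, (γ + (i:ℝ))) / (Nat.factorial m) : ℝ) : ℂ) * u ^ m)
      ((1 - u) ^ (-(γ:ℂ))) := by
  have hdiff : DifferentiableOn ℂ (fun s : ℂ => (1 - s) ^ (-(γ:ℂ))) (Metric.ball 0 1) := by
    intro t ht
    refine DifferentiableAt.differentiableWithinAt ?_
    exact ((differentiableAt_const (1:ℂ)).sub differentiableAt_id).cpow
      (differentiableAt_const _) (slit_of_ball (by simpa using ht))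
  have H := Complex.hasSum_taylorSeries_on_ball hdiff (mem_ball_zero_iff.mpr hu)
  convert H using 2 with m
  · rfl
  rw [iter_deriv_cpow γ m (by simp)]
  simp only [sub_zero, one_cpow, mul_one, smul_eq_mul]
  push_cast
  ring

lemma finite_multinomial {K : Type*} [Field K] [CharZero K] (b : ℕ → K) (s : Finset ℕ) (m : ℕ) :
    ∑ ν ∈ Finset.finsuppAntidiag s m,
        (∏ j ∈ ν.support, ((Nat.factorial (ν j)) : K))⁻¹ * ∏ j ∈ ν.support, b j ^ ν j
      = ((Nat.factorial m : K))⁻¹ * (∑ j ∈ s, b j) ^ m := by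
  classical
  rw [Finset.sum_pow_eq_sum_piAntidiag, Finset.mul_sum]
  refine Finset.sum_nbij (fun ν => ⇑ν) ?_ ?_ ?_ ?_
  · intro ν hν
    rw [Finset.mem_finsuppAntidiag] at hν
    rw [Finset.mem_piAntidiag]
    exact ⟨hν.1, fun i hi => hν.2 (Finsupp.mem_support_iff.mpr hi)⟩
  · exact fun x _ y _ h => DFunLike.coe_injective h
  · intro f hf
    rw [Finset.mem_coe, Finset.mem_piAntidiag] at hf
    refine ⟨Finsupp.onFinset s f hf.2, ?_, rfl⟩
    simp only [Finset.mem_coe, Finset.mem_finsuppAntidiag]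
    exact ⟨by simpa using hf.1, Finsupp.support_onFinset_subset⟩
  · intro ν hν
    rw [Finset.mem_finsuppAntidiag] at hν
    have hsupp : ν.support ⊆ s := hν.2
    have h1 : ∏ j ∈ ν.support, ((Nat.factorial (ν j)) : K) = ∏ j ∈ s, ((Nat.factorial (ν j)) : K) := by
      refine Finset.prod_subset hsupp fun j _ hj => ?_
      rw [Finsupp.notMem_support_iff.mp hj]; simp
    have h2 : ∏ j ∈ ν.support, b j ^ ν j = ∏ j ∈ s, b j ^ ν j := by
      refine Finset.prod_subset hsupp fun j _ hj => ?_
      rw [Finsupp.notMem_support_iff.mp hj]; simp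
    rw [h1, h2]
    have hspec := Nat.multinomial_spec s ν
    rw [hν.1] at hspec
    have : ((Nat.factorial m : K)) = (∏ i ∈ s, (Nat.factorial (ν i) : K)) * (Nat.multinomial s ν : K) := by
      rw [← hspec]; push_cast; ring
    rw [this]
    have hne : ∀ i ∈ s, ((Nat.factorial (ν i) : K)) ≠ 0 := fun i _ => Nat.cast_ne_zero.mpr (Nat.factorial_ne_zero _)
    have hm : ((Nat.multinomial s ⇑ν : K)) ≠ 0 :=
      Nat.cast_ne_zero.mpr (Nat.multinomial_pos _ _).ne'
    rw [mul_inv, mul_assoc, ← mul_assoc ((Nat.multinomial s ⇑ν : K))⁻¹,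
      inv_mul_cancel₀ hm, one_mul]
lemma slice_norm_eq {K : Type*} [RCLike K] (b : ℕ → K) (ν : ℕ →₀ ℕ) :
    ‖(∏ j ∈ ν.support, ((Nat.factorial (ν j)) : K))⁻¹ * ∏ j ∈ ν.support, b j ^ ν j‖
      = (∏ j ∈ ν.support, ((Nat.factorial (ν j)) : ℝ))⁻¹ * ∏ j ∈ ν.support, ‖b j‖ ^ ν j := by
  rw [norm_mul, norm_inv, norm_prod, norm_prod]
  congr 1
  · congr 1
    refine Finset.prod_congr rfl fun j _ => ?_
    rw [RCLike.norm_natCast]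
  · exact Finset.prod_congr rfl fun j _ => norm_pow _ _

lemma slice_hasSum {K : Type*} [RCLike K] (b : ℕ → K) (hb : Summable fun j => ‖b j‖) (m : ℕ) :
    HasSum (fun ν : {ν : ℕ →₀ ℕ // (ν.sum fun _ k => k) = m} =>
        (∏ j ∈ ν.1.support, ((Nat.factorial (ν.1 j)) : K))⁻¹ * ∏ j ∈ ν.1.support, b j ^ ν.1 j)
      ((Nat.factorial m : K)⁻¹ * (∑' j, b j) ^ m) := by
  classical
  set P : (ℕ →₀ ℕ) → Prop := fun ν => (ν.sum fun _ k => k) = m with hP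
  set H : (ℕ →₀ ℕ) → K := fun ν =>
    (∏ j ∈ ν.support, ((Nat.factorial (ν j)) : K))⁻¹ * ∏ j ∈ ν.support, b j ^ ν j with hH
  -- membership in finsuppAntidiag
  have hmem : ∀ (n : ℕ) (ν : ℕ →₀ ℕ), ν ∈ Finset.finsuppAntidiag (Finset.range n) m
      ↔ (P ν ∧ ν.support ⊆ Finset.range n) := by
    intro n ν
    rw [Finset.mem_finsuppAntidiag']
  -- summability of the norms
  have hnormsum : Summable fun ν : {ν : ℕ →₀ ℕ // P ν} => ‖H ν.1‖ := by
    have hnonneg : ∀ ν : {ν : ℕ →₀ ℕ // P ν}, 0 ≤ ‖H ν.1‖ := fun _ => norm_nonneg _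
    refine summable_of_sum_le hnonneg (c := (Nat.factorial m : ℝ)⁻¹ * (∑' j, ‖b j‖) ^ m) ?_
    intro u
    obtain ⟨n, hn⟩ : ∃ n : ℕ, ∀ ν ∈ u, (ν : {ν : ℕ →₀ ℕ // P ν}).1.support ⊆ Finset.range n := by
      refine ⟨(u.sup fun ν => ν.1.support.sup id) + 1, fun ν hν j hj => ?_⟩
      rw [Finset.mem_range]
      have h1 : j ≤ ν.1.support.sup id := Finset.le_sup (f := id) hj
      have h2 : ν.1.support.sup id ≤ u.sup fun ν => ν.1.support.sup id :=
        Finset.le_sup (f := fun ν : {ν : ℕ →₀ ℕ // P ν} => ν.1.support.sup id) hν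
      omega
    have hsub : u.map (Function.Embedding.subtype P) ⊆ Finset.finsuppAntidiag (Finset.range n) m := by
      intro ν hν
      rw [Finset.mem_map] at hν
      obtain ⟨ν', hν', rfl⟩ := hν
      exact (hmem n _).mpr ⟨ν'.2, hn ν' hν'⟩
    calc ∑ ν ∈ u, ‖H ν.1‖ = ∑ ν ∈ u.map (Function.Embedding.subtype P), ‖H ν‖ := by
          rw [Finset.sum_map]; rfl
      _ ≤ ∑ ν ∈ Finset.finsuppAntidiag (Finset.range n) m, ‖H ν‖ :=
          Finset.sum_le_sum_of_subset_of_nonneg hsub (fun _ _ _ => norm_nonneg _)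
      _ = (Nat.factorial m : ℝ)⁻¹ * (∑ j ∈ Finset.range n, ‖b j‖) ^ m := by
          rw [← finite_multinomial (fun j => ‖b j‖) (Finset.range n) m]
          exact Finset.sum_congr rfl fun ν _ => slice_norm_eq b ν
      _ ≤ (Nat.factorial m : ℝ)⁻¹ * (∑' j, ‖b j‖) ^ m := by
          refine mul_le_mul_of_nonneg_left ?_ (by positivity)
          refine pow_le_pow_left₀ (Finset.sum_nonneg fun _ _ => norm_nonneg _) ?_ m
          exact Summable.sum_le_tsum _ (fun _ _ => norm_nonneg _) hb
  have hsummable : Summable fun ν : {ν : ℕ →₀ ℕ // P ν} => H ν.1 := hnormsum.of_norm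
  -- identify the sum
  have hs : HasSum (fun ν : {ν : ℕ →₀ ℕ // P ν} => H ν.1) (∑' ν : {ν : ℕ →₀ ℕ // P ν}, H ν.1) :=
    hsummable.hasSum
  set A : ℕ → Finset {ν : ℕ →₀ ℕ // P ν} :=
    fun n => (Finset.finsuppAntidiag (Finset.range n) m).subtype P with hA
  have hmono : Monotone A := by
    intro n n' hnn' ν hν
    rw [Finset.mem_subtype] at hν ⊢
    rw [hmem] at hν ⊢
    exact ⟨hν.1, hν.2.trans (Finset.range_subset_range.mpr hnn')⟩
  have hcover : ∀ ν : {ν : ℕ →₀ ℕ // P ν}, ∃ n, ν ∈ A n := by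
    intro ν
    refine ⟨(ν.1.support.sup id) + 1, ?_⟩
    rw [Finset.mem_subtype, hmem]
    refine ⟨ν.2, fun j hj => Finset.mem_range.mpr ?_⟩
    have h1 : j ≤ ν.1.support.sup id := Finset.le_sup (f := id) hj
    omega
  have T1 : Filter.Tendsto (fun n => ∑ ν ∈ A n, H ν.1) Filter.atTop
      (nhds (∑' ν : {ν : ℕ →₀ ℕ // P ν}, H ν.1)) :=
    hs.comp (Filter.tendsto_atTop_finset_of_monotone hmono hcover)
  have hAsum : ∀ n, ∑ ν ∈ A n, H ν.1
      = (Nat.factorial m : K)⁻¹ * (∑ j ∈ Finset.range n, b j) ^ m := by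
    intro n
    rw [hA, Finset.sum_subtype_eq_sum_filter]
    rw [Finset.filter_true_of_mem (fun ν hν => ((hmem n ν).mp hν).1)]
    exact finite_multinomial b (Finset.range n) m
  have hsb : Summable b := hb.of_norm
  have T2 : Filter.Tendsto (fun n => ∑ ν ∈ A n, H ν.1) Filter.atTop
      (nhds ((Nat.factorial m : K)⁻¹ * (∑' j, b j) ^ m)) := by
    simp only [hAsum]
    exact (hsb.hasSum.tendsto_sum_nat.pow m).const_mul _
  have := tendsto_nhds_unique T1 T2
  rw [← this]
  exact hs

set_option maxHeartbeats 1000000 in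
theorem stmt_17 (γ : ℝ) (hγ : 0 < γ) (z w : ℕ → ℂ)
    (hz : Summable (fun j => ‖z j‖ ^ 2)) (hz1 : (∑' j : ℕ, ‖z j‖ ^ 2) < 1)
    (hw : Summable (fun j => ‖w j‖ ^ 2)) (hw1 : (∑' j : ℕ, ‖w j‖ ^ 2) < 1) :
    Summable (fun ν : ℕ →₀ ℕ =>
      ‖(((∏ i ∈ Finset.range (ν.sum fun _ k => k), (γ + i)) /
            ∏ j ∈ ν.support, ((Nat.factorial (ν j)) : ℝ)) : ℂ) *
        (∏ j ∈ ν.support, z j ^ ν j) * (∏ j ∈ ν.support, (starRingEnd ℂ) (w j) ^ ν j)‖) ∧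
    (∑' ν : ℕ →₀ ℕ,
        (((∏ i ∈ Finset.range (ν.sum fun _ k => k), (γ + i)) /
            ∏ j ∈ ν.support, ((Nat.factorial (ν j)) : ℝ)) : ℂ) *
          (∏ j ∈ ν.support, z j ^ ν j) * (∏ j ∈ ν.support, (starRingEnd ℂ) (w j) ^ ν j))
      = (1 - ∑' j : ℕ, z j * (starRingEnd ℂ) (w j)) ^ (-(γ : ℂ)) := by
  classical
  set a : ℕ → ℂ := fun j => z j * (starRingEnd ℂ) (w j) with ha
  set G : (ℕ →₀ ℕ) → ℂ := fun ν =>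
    (((∏ i ∈ Finset.range (ν.sum fun _ k => k), (γ + i)) /
            ∏ j ∈ ν.support, ((Nat.factorial (ν j)) : ℝ)) : ℂ) *
        (∏ j ∈ ν.support, z j ^ ν j) * (∏ j ∈ ν.support, (starRingEnd ℂ) (w j) ^ ν j) with hG
  set ρ : ℕ → ℝ := fun m => ∏ i ∈ Finset.range m, (γ + i) with hρ
  have hρ0 : ∀ m, 0 ≤ ρ m := fun m => Finset.prod_nonneg fun i _ => by positivity
  -- summability of `a` in norm
  have hbound : ∀ j, ‖a j‖ ≤ (‖z j‖ ^ 2 + ‖w j‖ ^ 2) / 2 := by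
    intro j
    rw [ha, norm_mul, RingHomIsometric.norm_map]
    nlinarith [sq_nonneg (‖z j‖ - ‖w j‖), norm_nonneg (z j), norm_nonneg (w j)]
  have hzw : Summable (fun j => (‖z j‖ ^ 2 + ‖w j‖ ^ 2) / 2) := (hz.add hw).div_const 2
  have hc : Summable (fun j => ‖a j‖) :=
    Summable.of_nonneg_of_le (fun _ => norm_nonneg _) hbound hzw
  set r : ℝ := ∑' j, ‖a j‖ with hrdef
  have hr0 : 0 ≤ r := tsum_nonneg fun _ => norm_nonneg _
  have hr1 : r < 1 := by
    have h1 : r ≤ ∑' j, (‖z j‖ ^ 2 + ‖w j‖ ^ 2) / 2 := Summable.tsum_le_tsum hbound hc hzw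
    have h2 : ∑' j, (‖z j‖ ^ 2 + ‖w j‖ ^ 2) / 2
        = ((∑' j, ‖z j‖ ^ 2) + ∑' j, ‖w j‖ ^ 2) / 2 := by
      rw [tsum_div_const, Summable.tsum_add hz hw]
    linarith
  set t : ℂ := ∑' j, a j with htdef
  have ht1 : ‖t‖ < 1 := lt_of_le_of_lt (norm_tsum_le_tsum_norm hc) hr1
  -- pointwise identities on slices
  have key1 : ∀ (m : ℕ) (ν : {ν : ℕ →₀ ℕ // (ν.sum fun _ k => k) = m}),
      G ν.1 = ((ρ m : ℝ) : ℂ) *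
        ((∏ j ∈ ν.1.support, ((Nat.factorial (ν.1 j)) : ℂ))⁻¹ * ∏ j ∈ ν.1.support, a j ^ ν.1 j) := by
    rintro m ⟨ν, hν⟩
    simp only [hG, hν]
    have hprod : ∏ j ∈ ν.support, a j ^ ν j
        = (∏ j ∈ ν.support, z j ^ ν j) * ∏ j ∈ ν.support, (starRingEnd ℂ) (w j) ^ ν j := by
      rw [← Finset.prod_mul_distrib]
      exact Finset.prod_congr rfl fun j _ => mul_pow _ _ _
    rw [hprod]
    rw [show ((∏ j ∈ ν.support, ((Nat.factorial (ν j)) : ℂ)) : ℂ)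
        = (((∏ j ∈ ν.support, ((Nat.factorial (ν j)) : ℝ)) : ℝ) : ℂ) by push_cast; ring]
    ring
  have key2 : ∀ (m : ℕ) (ν : {ν : ℕ →₀ ℕ // (ν.sum fun _ k => k) = m}),
      ‖G ν.1‖ = ρ m *
        ((∏ j ∈ ν.1.support, ((Nat.factorial (ν.1 j)) : ℝ))⁻¹ * ∏ j ∈ ν.1.support, ‖a j‖ ^ ν.1 j) := by
    intro m ν
    rw [key1 m ν, norm_mul, slice_norm_eq, Complex.norm_real, Real.norm_of_nonneg (hρ0 m)]
  -- slice HasSum facts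
  have hC : ∀ m : ℕ, HasSum (fun ν : {ν : ℕ →₀ ℕ // (ν.sum fun _ k => k) = m} => G ν.1)
      (((ρ m : ℝ) : ℂ) * ((Nat.factorial m : ℂ)⁻¹ * t ^ m)) := by
    intro m
    have := (slice_hasSum a hc m).mul_left ((ρ m : ℝ) : ℂ)
    refine HasSum.congr_fun this fun ν => key1 m ν
  have hN : ∀ m : ℕ, HasSum (fun ν : {ν : ℕ →₀ ℕ // (ν.sum fun _ k => k) = m} => ‖G ν.1‖)
      (ρ m * ((Nat.factorial m : ℝ)⁻¹ * r ^ m)) := by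
    intro m
    have := (slice_hasSum (fun j => ‖a j‖) (by simpa using hc) m).mul_left (ρ m)
    refine HasSum.congr_fun ?_ fun ν => key2 m ν
    exact this
  -- binomial series
  have hBt : HasSum (fun m : ℕ => ((ρ m / (Nat.factorial m) : ℝ) : ℂ) * t ^ m)
      ((1 - t) ^ (-(γ : ℂ))) := binomSeries γ ht1
  have hBr : Summable (fun m : ℕ => ρ m * ((Nat.factorial m : ℝ)⁻¹ * r ^ m)) := by
    have h := (binomSeries γ (u := (r : ℂ)) (by rwa [Complex.norm_real, Real.norm_of_nonneg hr0])).summable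
    have h2 : Summable (fun m : ℕ => ((ρ m / (Nat.factorial m) * r ^ m : ℝ) : ℂ)) := by
      refine h.congr fun m => ?_
      rw [hρ]; push_cast; ring
    have := Complex.summable_ofReal.mp h2
    refine this.congr fun m => by ring
  -- sigma decomposition
  set e := Equiv.sigmaFiberEquiv (fun ν : ℕ →₀ ℕ => ν.sum fun _ k => k) with he
  have hesnd : ∀ p : (Σ m : ℕ, {ν : ℕ →₀ ℕ // (ν.sum fun _ k => k) = m}), e p = p.2.1 := by
    rintro ⟨m, ν, rfl⟩; rfl
  have hsigmaNorm : Summable (fun p : (Σ m : ℕ, {ν : ℕ →₀ ℕ // (ν.sum fun _ k => k) = m}) =>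
      ‖G (e p)‖) := by
    have : (fun p : (Σ m : ℕ, {ν : ℕ →₀ ℕ // (ν.sum fun _ k => k) = m}) => ‖G (e p)‖)
        = fun p => ‖G p.2.1‖ := funext fun p => by rw [hesnd]
    rw [this]
    refine (summable_sigma_of_nonneg fun _ => norm_nonneg _).mpr ⟨fun m => (hN m).summable, ?_⟩
    refine hBr.congr fun m => ?_
    exact ((hN m).tsum_eq).symm
  have part1 : Summable (fun ν : ℕ →₀ ℕ => ‖G ν‖) := by
    rw [← Equiv.summable_iff e]
    exact hsigmaNorm
  refine ⟨part1, ?_⟩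
  have hGsum : Summable G := part1.of_norm
  have hsigma : Summable (fun p : (Σ m : ℕ, {ν : ℕ →₀ ℕ // (ν.sum fun _ k => k) = m}) =>
      G (e p)) := (Equiv.summable_iff e).mpr hGsum
  calc ∑' ν : ℕ →₀ ℕ, G ν = ∑' p : (Σ m : ℕ, {ν : ℕ →₀ ℕ // (ν.sum fun _ k => k) = m}), G (e p) :=
        (Equiv.tsum_eq e G).symm
    _ = ∑' (m : ℕ) (ν : {ν : ℕ →₀ ℕ // (ν.sum fun _ k => k) = m}), G (e ⟨m, ν⟩) :=
        Summable.tsum_sigma (by exact hsigma)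
    _ = ∑' (m : ℕ), (((ρ m : ℝ) : ℂ) * ((Nat.factorial m : ℂ)⁻¹ * t ^ m)) := by
        refine tsum_congr fun m => ?_
        rw [show (fun ν : {ν : ℕ →₀ ℕ // (ν.sum fun _ k => k) = m} => G (e ⟨m, ν⟩))
            = fun ν => G ν.1 from funext fun ν => by rw [hesnd ⟨m, ν⟩]]
        exact (hC m).tsum_eq
    _ = (1 - t) ^ (-(γ : ℂ)) := by
        rw [← hBt.tsum_eq]
        refine tsum_congr fun m => ?_
        push_cast
        ring
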